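/- Let M > 0 and let f = h + conj(g) be a harmonic mapping in the class P⁰_H(M) such that |f(z)| < M for all z ∈ D. Then f is univalent (injective) on the disc D_{ρ₁}, where ρ₁ = 1 − exp(−π/(8M²)). -/

import Mathlib

open Complex Metric Set intervalIntegral


lemma exists_unit_align (a b : ℂ) : ∃ u : ℂ, ‖u‖ = 1 ∧
    ‖a‖ + ‖b‖ = ‖a + u * b‖ := by
  rcases eq_or_ne b 0 with rfl | hb
  · exact ⟨1, by simp⟩
  rcases eq_or_ne a 0 with rfl | ha
  · exact ⟨1, by simp⟩
  have ha0 : (‖a‖ : ℂ) ≠ 0 := by simpa using ha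
  have hb0 : (‖b‖ : ℂ) ≠ 0 := by simpa using hb
  refine ⟨(a * (starRingEnd ℂ) b) / ((‖a‖ : ℂ) * (‖b‖ : ℂ)), ?_, ?_⟩
  · rw [norm_div, norm_mul, norm_mul, Complex.norm_conj, Complex.norm_real, Real.norm_eq_abs, Complex.norm_real, Real.norm_eq_abs,
      _root_.abs_of_nonneg (norm_nonneg a), _root_.abs_of_nonneg (norm_nonneg b)]
    exact (div_self (mul_ne_zero (norm_ne_zero_iff.mpr ha) (norm_ne_zero_iff.mpr hb))).symm ▸ rfl
  · have key : a + (a * (starRingEnd ℂ) b) / ((‖a‖ : ℂ) * (‖b‖ : ℂ)) * b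
        = a * ((‖a‖ + ‖b‖ : ℝ) : ℂ) / (‖a‖ : ℂ) := by
      have hb' : (starRingEnd ℂ) b * b = ((‖b‖ : ℝ) : ℂ) ^ 2 := by
        rw [mul_comm, Complex.mul_conj]; norm_cast; rw [Complex.sq_norm]
      field_simp
      ring_nf
      rw [hb'] ; push_cast; ring
    rw [key, norm_div, norm_mul, Complex.norm_real, Real.norm_eq_abs, Complex.norm_real, Real.norm_eq_abs,
      _root_.abs_of_nonneg (add_nonneg (norm_nonneg a) (norm_nonneg b)),
      _root_.abs_of_nonneg (norm_nonneg a)]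
    rw [mul_comm, mul_div_assoc, div_self (norm_ne_zero_iff.mpr ha), mul_one]


lemma key_bound (M : ℝ) (hM : 0 < M) (h g : ℂ → ℂ)
    (hh : DifferentiableOn ℂ h (Metric.ball 0 1))
    (hg : DifferentiableOn ℂ g (Metric.ball 0 1))
    (hh1 : deriv h 0 = 1) (hg1 : deriv g 0 = 0)
    (hclass : ∀ z ∈ Metric.ball (0:ℂ) 1,
      (z * deriv (deriv h) z).re > -M + ‖z * deriv (deriv g) z‖)
    (u : ℂ) (hu : ‖u‖ = 1) {z : ℂ} (hz : z ∈ Metric.ball (0:ℂ) 1) :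
    ‖deriv h z - 1 + u * deriv g z‖
      ≤ 2 * M * (-Real.log (1 - ‖z‖)) := by
  set φ : ℂ → ℂ := fun w => h w - w + u * g w with hφdef
  have hφd : DifferentiableOn ℂ φ (Metric.ball 0 1) :=
    ((hh.sub differentiableOn_id).add (hg.const_mul u))
  have hφa : AnalyticOnNhd ℂ φ (Metric.ball 0 1) := hφd.analyticOnNhd isOpen_ball
  have hha : AnalyticOnNhd ℂ h (Metric.ball 0 1) := hh.analyticOnNhd isOpen_ball
  have hga : AnalyticOnNhd ℂ g (Metric.ball 0 1) := hg.analyticOnNhd isOpen_ball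
  -- first derivative of φ on the ball
  have dφ : ∀ w ∈ Metric.ball (0:ℂ) 1, deriv φ w = deriv h w - 1 + u * deriv g w := by
    intro w hw
    have hhw : DifferentiableAt ℂ h w := hh.differentiableAt (isOpen_ball.mem_nhds hw)
    have hgw : DifferentiableAt ℂ g w := hg.differentiableAt (isOpen_ball.mem_nhds hw)
    have : HasDerivAt φ (deriv h w - 1 + u * deriv g w) w :=
      (hhw.hasDerivAt.sub (hasDerivAt_id w)).add (hgw.hasDerivAt.const_mul u)
    exact this.deriv
  -- second derivative of φ on the ball
  have ddφ : ∀ w ∈ Metric.ball (0:ℂ) 1,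
      deriv (deriv φ) w = deriv (deriv h) w + u * deriv (deriv g) w := by
    intro w hw
    have hev : deriv φ =ᶠ[nhds w] fun w => deriv h w - 1 + u * deriv g w :=
      Filter.eventuallyEq_of_mem (isOpen_ball.mem_nhds hw) dφ
    rw [hev.deriv_eq]
    have hhw : DifferentiableAt ℂ (deriv h) w := (hha.deriv w hw).differentiableAt
    have hgw : DifferentiableAt ℂ (deriv g) w := (hga.deriv w hw).differentiableAt
    have : HasDerivAt (fun w => deriv h w - 1 + u * deriv g w)
        (deriv (deriv h) w + u * deriv (deriv g) w) w :=
      (hhw.hasDerivAt.sub_const 1).add (hgw.hasDerivAt.const_mul u)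
    exact this.deriv
  set P : ℂ → ℂ := fun w => w * deriv (deriv φ) w + (M : ℂ) with hPdef
  have hPd : DifferentiableOn ℂ P (Metric.ball 0 1) :=
    (differentiableOn_id.mul hφa.deriv.deriv.differentiableOn).add_const _
  have hPre : ∀ w ∈ Metric.ball (0:ℂ) 1, 0 < (P w).re := by
    intro w hw
    have hcl := hclass w hw
    have hrw : P w = w * deriv (deriv h) w + u * (w * deriv (deriv g) w) + (M:ℂ) := by
      rw [hPdef]; dsimp only; rw [ddφ w hw]; ring
    have h1 : -(‖w * deriv (deriv g) w‖) ≤ (u * (w * deriv (deriv g) w)).re := by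
      have h0 := Complex.abs_re_le_norm (u * (w * deriv (deriv g) w))
      rw [norm_mul, hu, one_mul] at h0
      have := neg_le_of_abs_le h0
      linarith [neg_le_of_abs_le h0]
    rw [hrw]
    simp only [Complex.add_re, Complex.ofReal_re]
    linarith
  have hPne : ∀ w ∈ Metric.ball (0:ℂ) 1, P w + (M:ℂ) ≠ 0 := by
    intro w hw hc
    have : (P w + (M:ℂ)).re = 0 := by rw [hc]; simp
    simp only [Complex.add_re, Complex.ofReal_re] at this
    have := hPre w hw
    linarith
  set W : ℂ → ℂ := fun w => (P w - (M:ℂ)) / (P w + (M:ℂ)) with hWdef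
  have hWd : DifferentiableOn ℂ W (Metric.ball 0 1) :=
    (hPd.sub_const _).div (hPd.add_const _) hPne
  have hW0 : W 0 = 0 := by
    have : P 0 = (M:ℂ) := by rw [hPdef]; simp
    rw [hWdef]; dsimp only; rw [this]; simp
  have hWmaps : MapsTo W (Metric.ball 0 1) (Metric.ball 0 1) := by
    intro w hw
    rw [mem_ball_zero_iff]
    have hlt : ‖P w - (M:ℂ)‖ < ‖P w + (M:ℂ)‖ := by
      have hsq : ‖P w - (M:ℂ)‖ ^ 2 < ‖P w + (M:ℂ)‖ ^ 2 := by
        rw [Complex.sq_norm, Complex.sq_norm, Complex.normSq_apply, Complex.normSq_apply]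
        simp only [Complex.sub_re, Complex.add_re, Complex.sub_im, Complex.add_im,
          Complex.ofReal_re, Complex.ofReal_im, sub_zero, add_zero]
        nlinarith [hPre w hw, hM]
      exact lt_of_pow_lt_pow_left₀ 2 (norm_nonneg _) hsq
    show ‖(P w - (M:ℂ)) / (P w + (M:ℂ))‖ < 1
    rw [norm_div, div_lt_one (lt_of_le_of_lt (norm_nonneg _) hlt)]
    exact hlt
  have hSchwarz : ∀ w ∈ Metric.ball (0:ℂ) 1, ‖W w‖ ≤ ‖w‖ :=
    fun w hw => Complex.norm_le_norm_of_mapsTo_ball hWd (hWmaps.mono_right ball_subset_closedBall) hW0 (mem_ball_zero_iff.1 hw)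
  -- bound on |w * φ''(w)|
  have hkey : ∀ w ∈ Metric.ball (0:ℂ) 1,
      ‖w * deriv (deriv φ) w‖ * (1 - ‖w‖)
        ≤ 2 * M * ‖w‖ := by
    intro w hw
    have hweq : P w - (M:ℂ) = W w * (P w + (M:ℂ)) := by
      rw [hWdef]; dsimp only; rw [div_mul_cancel₀ _ (hPne w hw)]
    have h1 : ‖P w - (M:ℂ)‖ ≤ ‖w‖ * ‖P w + (M:ℂ)‖ := by
      rw [hweq, norm_mul]
      exact mul_le_mul_of_nonneg_right (hSchwarz w hw) (norm_nonneg _)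
    have h2 : ‖P w + (M:ℂ)‖ ≤ ‖P w - (M:ℂ)‖ + 2 * M := by
      have : P w + (M:ℂ) = (P w - (M:ℂ)) + (2*M : ℝ) := by push_cast; ring
      rw [this]
      refine (norm_add_le _ _).trans ?_
      rw [Complex.norm_real, Real.norm_eq_abs, abs_of_pos (by linarith)]
    have h3 : P w - (M:ℂ) = w * deriv (deriv φ) w := by rw [hPdef]; ring
    have hw1 : ‖w‖ < 1 := mem_ball_zero_iff.1 hw
    rw [← h3]
    nlinarith [norm_nonneg (P w - (M:ℂ)), norm_nonneg w]
  -- now FTC from 0 to z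
  rcases eq_or_ne z 0 with rfl | hz0
  · rw [hh1, hg1]
    simp only [map_zero, mul_zero, add_zero, sub_self, Real.log_one]
    simp
  have hr0 : 0 < ‖z‖ := norm_pos_iff.mpr hz0
  have hr1 : ‖z‖ < 1 := mem_ball_zero_iff.1 hz
  set r : ℝ := ‖z‖ with hrdef
  have hmem : ∀ t : ℝ, t ∈ Set.uIcc (0:ℝ) 1 → (t:ℂ) * z ∈ Metric.ball (0:ℂ) 1 := by
    intro t ht
    rw [Set.uIcc_of_le (by norm_num : (0:ℝ) ≤ 1)] at ht
    rw [mem_ball_zero_iff, norm_mul, Complex.norm_real, Real.norm_eq_abs, _root_.abs_of_nonneg ht.1]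
    calc t * r ≤ 1 * r := by nlinarith [ht.2]
    _ < 1 := by rw [one_mul]; exact hr1
  have hF : ∀ t ∈ Set.uIcc (0:ℝ) 1,
      HasDerivAt (fun t : ℝ => deriv φ ((t:ℂ) * z))
        (z * deriv (deriv φ) ((t:ℂ) * z)) t := by
    intro t ht
    have h1 : HasDerivAt (fun w : ℂ => deriv φ (w * z))
        (deriv (deriv φ) ((t:ℂ) * z) * z) (t:ℂ) := by
      have ho : HasDerivAt (deriv φ) (deriv (deriv φ) ((t:ℂ)*z)) ((t:ℂ)*z) :=
        (hφa.deriv _ (hmem t ht)).differentiableAt.hasDerivAt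
      have hi : HasDerivAt (fun w : ℂ => w * z) z (t:ℂ) := by
        simpa using (hasDerivAt_id ((t:ℂ))).mul_const z
      exact ho.comp (t:ℂ) hi
    have := h1.comp_ofReal
    simpa [mul_comm] using this
  have hcont : ContinuousOn (fun t : ℝ => z * deriv (deriv φ) ((t:ℂ) * z))
      (Set.uIcc (0:ℝ) 1) := by
    apply ContinuousOn.mul continuousOn_const
    apply (hφa.deriv.deriv.continuousOn).comp
    · exact (continuous_ofReal.mul continuous_const).continuousOn
    · intro t ht; exact hmem t ht
  have hFTC := intervalIntegral.integral_eq_sub_of_hasDerivAt hF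
    (hcont.intervalIntegrable)
  have hφ'0 : deriv φ 0 = 0 := by
    rw [dφ 0 (by simp), hh1, hg1]; ring
  have hφ'z : deriv φ z = ∫ t in (0:ℝ)..1, z * deriv (deriv φ) ((t:ℂ) * z) := by
    rw [hFTC]; push_cast; rw [one_mul]
    norm_num [hφ'0]
  -- bound
  have hbnd : ∀ t ∈ Set.uIoc (0:ℝ) 1,
      ‖z * deriv (deriv φ) ((t:ℂ) * z)‖ ≤ 2 * M * r / (1 - t * r) := by
    intro t ht
    rw [Set.uIoc_of_le (by norm_num : (0:ℝ) ≤ 1)] at ht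
    have ht0 : 0 < t := ht.1
    have ht1 : t ≤ 1 := ht.2
    have htmem : (t:ℂ) * z ∈ Metric.ball (0:ℂ) 1 :=
      hmem t (by rw [Set.uIcc_of_le (by norm_num : (0:ℝ) ≤ 1)]; exact ⟨ht0.le, ht1⟩)
    have hk := hkey ((t:ℂ) * z) htmem
    have habs : ‖(t:ℂ) * z‖ = t * r := by
      rw [norm_mul, Complex.norm_real, Real.norm_eq_abs, abs_of_pos ht0]
    rw [habs] at hk
    have heq2 : ‖(t:ℂ) * z * deriv (deriv φ) ((t:ℂ)*z)‖
        = t * ‖z * deriv (deriv φ) ((t:ℂ)*z)‖ := by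
      rw [mul_assoc, norm_mul, Complex.norm_real, Real.norm_eq_abs, _root_.abs_of_pos ht0]
    rw [heq2] at hk
    have htr : t * r < 1 := by nlinarith
    have hpos : 0 < 1 - t * r := by linarith
    rw [le_div_iff₀ hpos]
    nlinarith [norm_nonneg (z * deriv (deriv φ) ((t:ℂ)*z))]
  have hBint : ∀ t ∈ Set.uIcc (0:ℝ) 1,
      HasDerivAt (fun t : ℝ => -(2*M) * Real.log (1 - t * r)) (2 * M * r / (1 - t * r)) t := by
    intro t ht
    rw [Set.uIcc_of_le (by norm_num : (0:ℝ) ≤ 1)] at ht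
    have hpos : 0 < 1 - t * r := by nlinarith [ht.1, ht.2]
    have h1 : HasDerivAt (fun t : ℝ => 1 - t * r) (-r) t := by
      simpa using ((hasDerivAt_id t).mul_const r).const_sub 1
    have h2 : HasDerivAt (fun t : ℝ => Real.log (1 - t * r)) ((1 - t*r)⁻¹ * (-r)) t :=
      by have := (Real.hasDerivAt_log hpos.ne').comp t h1; exact this
    have := h2.const_mul (-(2*M))
    refine this.congr_deriv ?_
    rw [div_eq_mul_inv]; ring
  have hBcont : ContinuousOn (fun t : ℝ => 2 * M * r / (1 - t * r)) (Set.uIcc (0:ℝ) 1) := by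
    apply ContinuousOn.div continuousOn_const
    · exact (continuous_const.sub (continuous_id.mul continuous_const)).continuousOn
    · intro t ht
      rw [Set.uIcc_of_le (by norm_num : (0:ℝ) ≤ 1)] at ht
      nlinarith [ht.1, ht.2]
  have hBval : (∫ t in (0:ℝ)..1, 2 * M * r / (1 - t * r)) = 2 * M * (-Real.log (1 - r)) := by
    rw [intervalIntegral.integral_eq_sub_of_hasDerivAt hBint hBcont.intervalIntegrable]
    norm_num
  have hlogpos : 0 < -Real.log (1 - r) := by
    have : Real.log (1 - r) < 0 := Real.log_neg (by linarith) (by linarith)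
    linarith
  have hnorm : ‖deriv φ z‖ ≤ 2 * M * (-Real.log (1 - r)) := by
    have hae : ∀ᵐ (t : ℝ) ∂(MeasureTheory.volume.restrict (Set.uIoc (0:ℝ) 1)),
        ‖z * deriv (deriv φ) ((t:ℂ) * z)‖ ≤ 2 * M * r / (1 - t * r) :=
      (MeasureTheory.ae_restrict_iff' measurableSet_uIoc).mpr
        (Filter.Eventually.of_forall hbnd)
    have hle := intervalIntegral.norm_integral_le_of_norm_le (by norm_num) ((MeasureTheory.ae_restrict_iff' measurableSet_uIoc).mp hae |>.mono fun t ht ht' => ht (by rwa [Set.uIoc_of_le zero_le_one])) hBcont.intervalIntegrable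
    rw [hBval] at hle
    rw [hφ'z]
    exact hle
  calc ‖deriv h z - 1 + u * deriv g z‖
      = ‖deriv φ z‖ := by rw [dφ z hz]
    _ ≤ 2 * M * (-Real.log (1 - r)) := hnorm


lemma intervalIntegral_conj (F : ℝ → ℂ) (a b : ℝ) :
    (∫ θ in a..b, (starRingEnd ℂ) (F θ)) = (starRingEnd ℂ) (∫ θ in a..b, F θ) := by
  rw [intervalIntegral, intervalIntegral, integral_conj, integral_conj, ← map_sub]

lemma conj_circle_zero (g : ℂ → ℂ) (hg : DifferentiableOn ℂ g (Metric.ball 0 1))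
    {r : ℝ} (hr0 : 0 < r) (hr1 : r < 1) :
    (∮ z in C(0, r), (z:ℂ) ^ (-2 : ℤ) • (starRingEnd ℂ) (g z)) = 0 := by
  have hgint : (∮ z in C(0, r), g z) = 0 := by
    apply circleIntegral_eq_zero_of_differentiable_on_off_countable hr0.le
      Set.countable_empty
    · exact hg.continuousOn.mono fun x hx => mem_ball_zero_iff.2
        (lt_of_le_of_lt (mem_closedBall_zero_iff.1 hx) hr1)
    · intro z hz
      exact hg.differentiableAt (isOpen_ball.mem_nhds (mem_ball_zero_iff.2
        (lt_of_lt_of_le (mem_ball_zero_iff.1 hz.1) hr1.le)))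
  have hr0' : (r:ℂ) ≠ 0 := by exact_mod_cast hr0.ne'
  have key : ∀ θ : ℝ,
      deriv (circleMap 0 r) θ • ((circleMap 0 r θ) ^ (-2 : ℤ) • (starRingEnd ℂ) (g (circleMap 0 r θ)))
      = (starRingEnd ℂ) ((-(1:ℂ)/(r:ℂ)^2) * (deriv (circleMap 0 r) θ • g (circleMap 0 r θ))) := by
    intro θ
    set c : ℂ := circleMap 0 r θ with hc
    have hcne : c ≠ 0 := circleMap_ne_center hr0.ne'
    have hcc : c * (starRingEnd ℂ) c = ((r:ℂ))^2 := by
      rw [Complex.mul_conj]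
      have habs : ‖c‖ = r := by
        rw [hc]; simpa [_root_.abs_of_pos hr0] using norm_circleMap_zero r θ
      rw [← Complex.sq_norm, habs]
      norm_cast
    have hconj : (starRingEnd ℂ) c = ((r:ℂ))^2 / c := by
      rw [eq_div_iff hcne, mul_comm]; exact hcc
    rw [deriv_circleMap, ← hc]
    simp only [smul_eq_mul, map_mul, map_neg, map_div₀, map_one, Complex.conj_I,
      map_pow, Complex.conj_ofReal, hconj]
    rw [zpow_neg, zpow_two]
    field_simp
  rw [circleIntegral]
  simp_rw [key]
  rw [_root_.intervalIntegral_conj]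
  rw [intervalIntegral.integral_const_mul]
  have : (∫ θ in (0:ℝ)..(2*Real.pi), deriv (circleMap 0 r) θ • g (circleMap 0 r θ))
      = (∮ z in C(0, r), g z) := rfl
  rw [this, hgint, mul_zero, map_zero]

lemma M_ge_one (M : ℝ) (hM : 0 < M) (h g : ℂ → ℂ)
    (hh : DifferentiableOn ℂ h (Metric.ball 0 1))
    (hg : DifferentiableOn ℂ g (Metric.ball 0 1))
    (hh1 : deriv h 0 = 1)
    (hbound : ∀ z ∈ Metric.ball (0:ℂ) 1,
      ‖h z + starRingEnd ℂ (g z)‖ < M) : 1 ≤ M := by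
  by_contra hlt
  push_neg at hlt
  set r : ℝ := (1 + M) / 2 with hrdef
  have hrM : M < r := by rw [hrdef]; linarith
  have hr0 : 0 < r := by rw [hrdef]; linarith
  have hr1 : r < 1 := by rw [hrdef]; linarith
  have hsub : closedBall (0:ℂ) r ⊆ Metric.ball 0 1 := fun x hx =>
    mem_ball_zero_iff.2 (lt_of_le_of_lt (mem_closedBall_zero_iff.1 hx) hr1)
  have hD : DiffContOnCl ℂ h (Metric.ball 0 r) := by
    constructor
    · exact hh.mono (ball_subset_ball hr1.le)
    · exact hh.continuousOn.mono (le_trans (closure_ball_subset_closedBall) hsub)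
  have hderiv : deriv h 0 = ((2 * Real.pi * Complex.I : ℂ))⁻¹ • ∮ z in C(0, r), (z - 0) ^ (-2:ℤ) • h z := by
    have := hD.deriv_eq_smul_circleIntegral hr0
    rw [eq_inv_smul_iff₀ (by simp [Real.pi_ne_zero]), ← this]
    congr 1; funext z; simp [zpow_neg]
  -- circle integrability
  have hcontsphere : ∀ F : ℂ → ℂ, ContinuousOn F (Metric.ball 0 1) →
      CircleIntegrable (fun z => (z:ℂ)^(-2:ℤ) • F z) 0 r := by
    intro F hF
    apply ContinuousOn.circleIntegrable hr0.le
    apply ContinuousOn.smul (f := fun z : ℂ => z ^ (-2:ℤ)) (g := F)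
    · intro z hz
      have hzne : z ≠ 0 := by
        intro hz0; rw [hz0] at hz
        simp only [mem_sphere_zero_iff_norm, norm_zero] at hz
        exact hr0.ne' hz.symm
      exact ((continuousAt_id.zpow₀ _ (Or.inl hzne)).continuousWithinAt)
    · exact hF.mono fun x hx => mem_ball_zero_iff.2
        (by rw [mem_sphere_zero_iff_norm] at hx; rw [hx]; exact hr1)
  have hint1 : CircleIntegrable (fun z => (z:ℂ)^(-2:ℤ) • h z) 0 r :=
    hcontsphere h hh.continuousOn
  have hint2 : CircleIntegrable (fun z => (z:ℂ)^(-2:ℤ) • (starRingEnd ℂ) (g z)) 0 r :=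
    hcontsphere _ (Complex.continuous_conj.comp_continuousOn hg.continuousOn)
  have hsplit : (∮ z in C(0,r), (z:ℂ)^(-2:ℤ) • (h z + (starRingEnd ℂ) (g z)))
      = ∮ z in C(0,r), (z:ℂ)^(-2:ℤ) • h z := by
    have heq : (fun z => (z:ℂ)^(-2:ℤ) • h z)
        = fun z => (z:ℂ)^(-2:ℤ) • (h z + (starRingEnd ℂ) (g z))
            - (z:ℂ)^(-2:ℤ) • (starRingEnd ℂ) (g z) := by
      funext z; rw [smul_add]; ring
    have hint3 : CircleIntegrable
        (fun z => (z:ℂ)^(-2:ℤ) • (h z + (starRingEnd ℂ) (g z))) 0 r :=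
      hcontsphere _ (hh.continuousOn.add
        (Complex.continuous_conj.comp_continuousOn hg.continuousOn))
    rw [heq, circleIntegral.integral_sub hint3 hint2,
      conj_circle_zero g hg hr0 hr1, sub_zero]
  have hbnd : ∀ z ∈ Metric.sphere (0:ℂ) r,
      ‖(z:ℂ)^(-2:ℤ) • (h z + (starRingEnd ℂ) (g z))‖ ≤ M / r^2 := by
    intro z hz
    rw [mem_sphere_zero_iff_norm] at hz
    rw [norm_smul, norm_zpow, hz]
    have hzb : z ∈ Metric.ball (0:ℂ) 1 := mem_ball_zero_iff.2 (by rw [hz]; exact hr1)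
    have := (hbound z hzb).le
    rw [zpow_neg, zpow_two]
    calc (r * r)⁻¹ * ‖h z + (starRingEnd ℂ) (g z)‖
        ≤ (r * r)⁻¹ * M := by
          apply mul_le_mul_of_nonneg_left this (by positivity)
      _ = M / r^2 := by rw [sq]; ring
  have hnormint : ‖∮ z in C(0,r), (z:ℂ)^(-2:ℤ) • (h z + (starRingEnd ℂ) (g z))‖
      ≤ 2 * Real.pi * r * (M / r^2) :=
    circleIntegral.norm_integral_le_of_norm_le_const hr0.le hbnd
  have h2pi : ‖((2 * Real.pi * Complex.I : ℂ))⁻¹‖ = (2 * Real.pi)⁻¹ := by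
    rw [norm_inv]
    simp [Complex.norm_I, Complex.norm_real, Real.norm_eq_abs,
      Complex.norm_two, _root_.abs_of_pos Real.pi_pos]
  have hone : (1:ℝ) ≤ M / r := by
    have : ‖deriv h 0‖ ≤ (2 * Real.pi)⁻¹ * (2 * Real.pi * r * (M / r^2)) := by
      rw [hderiv]
      rw [norm_smul, h2pi]
      apply mul_le_mul_of_nonneg_left _ (by positivity)
      have : (fun z : ℂ => (z - 0)^(-2:ℤ) • h z) = fun z : ℂ => (z:ℂ)^(-2:ℤ) • h z := by
        funext z; rw [sub_zero]
      rw [this, ← hsplit]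
      exact hnormint
    rw [hh1] at this
    simp only [norm_one] at this
    calc (1:ℝ) ≤ (2 * Real.pi)⁻¹ * (2 * Real.pi * r * (M / r^2)) := this
      _ = M / r := by field_simp
  have : M / r < 1 := (div_lt_one hr0).2 hrM
  linarith

set_option maxHeartbeats 1000000 in
/-- Landau-type theorem for the class `P⁰_H(M)`: univalence radius.
`f = h + conj g` with `h, g` analytic on the unit disc, normalized by
`h(0) = 0`, `h'(0) = 1`, `g(0) = 0`, `g'(0) = 0`, satisfying
`Re (z h''(z)) > -M + |z g''(z)|` on the disc and `|f| < M`.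
Then `f` is injective on the disc of radius `ρ₁ = 1 - exp (-π/(8M²))`. -/
theorem landau_P0HM_univalence (M : ℝ) (hM : 0 < M) (h g : ℂ → ℂ)
    (hh : DifferentiableOn ℂ h (Metric.ball 0 1))
    (hg : DifferentiableOn ℂ g (Metric.ball 0 1))
    (hh0 : h 0 = 0) (hh1 : deriv h 0 = 1)
    (hg0 : g 0 = 0) (hg1 : deriv g 0 = 0)
    (hclass : ∀ z ∈ Metric.ball (0:ℂ) 1,
      (z * deriv (deriv h) z).re > -M + ‖z * deriv (deriv g) z‖)
    (hbound : ∀ z ∈ Metric.ball (0:ℂ) 1,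
      ‖h z + starRingEnd ℂ (g z)‖ < M) :
    Set.InjOn (fun z => h z + starRingEnd ℂ (g z))
      (Metric.ball 0 (1 - Real.exp (-(Real.pi / (8 * M ^ 2))))) := by
  have M1 : 1 ≤ M := M_ge_one M hM h g hh hg hh1 hbound
  intro z₁ hz₁ z₂ hz₂ heq
  set ρ₁ : ℝ := 1 - Real.exp (-(Real.pi / (8 * M ^ 2))) with hρ₁def
  have hexp : 0 < Real.exp (-(Real.pi / (8 * M ^ 2))) := Real.exp_pos _
  have hexp1 : Real.exp (-(Real.pi / (8 * M ^ 2))) < 1 := by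
    rw [Real.exp_lt_one_iff]
    have : 0 < Real.pi / (8 * M ^ 2) := by positivity
    linarith
  have hρ₁pos : 0 < ρ₁ := by rw [hρ₁def]; linarith
  have hρ₁lt1 : ρ₁ < 1 := by rw [hρ₁def]; linarith
  have hz₁' : ‖z₁‖ < ρ₁ := by
    exact mem_ball_zero_iff.1 hz₁
  have hz₂' : ‖z₂‖ < ρ₁ := by
    exact mem_ball_zero_iff.1 hz₂
  set ρ : ℝ := max (‖z₁‖) (‖z₂‖) with hρdef
  have hρ0 : 0 ≤ ρ := le_trans (norm_nonneg z₁) (le_max_left _ _)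
  have hρlt : ρ < ρ₁ := max_lt hz₁' hz₂'
  have hρlt1 : ρ < 1 := lt_trans hρlt hρ₁lt1
  -- the contraction constant
  set c : ℝ := 2 * M * (-Real.log (1 - ρ)) with hcdef
  have hc0 : 0 ≤ c := by
    have : Real.log (1 - ρ) ≤ 0 :=
      Real.log_nonpos (by linarith) (by linarith)
    have h2M : 0 ≤ 2 * M := by linarith
    rw [hcdef]; nlinarith
  have hc1 : c < 1 := by
    have hlog : Real.log (1 - ρ₁) < Real.log (1 - ρ) := by
      apply Real.log_lt_log (by rw [hρ₁def]; linarith)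
      linarith
    have hval : Real.log (1 - ρ₁) = -(Real.pi / (8 * M ^ 2)) := by
      rw [hρ₁def]; simp [Real.log_exp]
    rw [hval] at hlog
    have hL : -Real.log (1 - ρ) < Real.pi / (8 * M ^ 2) := by linarith
    have h8 : (0:ℝ) < 8 * M ^ 2 := by positivity
    have hL' : (-Real.log (1 - ρ)) * (8 * M ^ 2) < Real.pi :=
      (lt_div_iff₀ h8).1 hL
    have hπ : Real.pi < 3.15 := Real.pi_lt_d2
    rw [hcdef]
    nlinarith [hL', hπ, M1, mul_pos hM hM]
  -- the segment
  set d : ℂ := z₂ - z₁ with hddef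
  set γ : ℝ → ℂ := fun t => z₁ + (t:ℂ) * d with hγdef
  have hγabs : ∀ t ∈ Set.uIcc (0:ℝ) 1, ‖γ t‖ ≤ ρ := by
    intro t ht
    rw [Set.uIcc_of_le (by norm_num : (0:ℝ) ≤ 1)] at ht
    have hγeq : γ t = (1 - (t:ℂ)) * z₁ + (t:ℂ) * z₂ := by
      rw [hγdef]; dsimp only; rw [hddef]; ring
    rw [hγeq]
    calc ‖(1 - (t:ℂ)) * z₁ + (t:ℂ) * z₂‖
        ≤ ‖(1 - (t:ℂ)) * z₁‖ + ‖(t:ℂ) * z₂‖ :=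
          norm_add_le _ _
      _ = (1 - t) * ‖z₁‖ + t * ‖z₂‖ := by
          rw [norm_mul, norm_mul]
          have h1 : ((1:ℂ) - (t:ℂ)) = ((1 - t : ℝ) : ℂ) := by push_cast; ring
          rw [h1, Complex.norm_real, Real.norm_eq_abs, Complex.norm_real, Real.norm_eq_abs,
            _root_.abs_of_nonneg (by linarith [ht.2] : (0:ℝ) ≤ 1 - t),
            _root_.abs_of_nonneg ht.1]
      _ ≤ (1 - t) * ρ + t * ρ := by
          have h1 : ‖z₁‖ ≤ ρ := le_max_left _ _
          have h2 : ‖z₂‖ ≤ ρ := le_max_right _ _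
          have ht1 : (0:ℝ) ≤ 1 - t := by linarith [ht.2]
          nlinarith [ht.1]
      _ = ρ := by ring
  have hγball : ∀ t ∈ Set.uIcc (0:ℝ) 1, γ t ∈ Metric.ball (0:ℂ) 1 := by
    intro t ht
    rw [mem_ball_zero_iff]
    exact lt_of_le_of_lt (hγabs t ht) hρlt1
  -- derivative of f along the segment
  have hF : ∀ t ∈ Set.uIcc (0:ℝ) 1,
      HasDerivAt (fun t : ℝ => h (γ t) + (starRingEnd ℂ) (g (γ t)))
        (deriv h (γ t) * d + (starRingEnd ℂ) (deriv g (γ t) * d)) t := by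
    intro t ht
    have hγ' : HasDerivAt γ d t := by
      have h0 : HasDerivAt (fun w : ℂ => z₁ + w * d) d (t:ℂ) := by
        simpa using ((hasDerivAt_id ((t:ℂ))).mul_const d).const_add z₁
      exact h0.comp_ofReal
    have hhd : HasDerivAt h (deriv h (γ t)) (γ t) :=
      (hh.differentiableAt (isOpen_ball.mem_nhds (hγball t ht))).hasDerivAt
    have hgd : HasDerivAt g (deriv g (γ t)) (γ t) :=
      (hg.differentiableAt (isOpen_ball.mem_nhds (hγball t ht))).hasDerivAt
    have H1 : HasDerivAt (fun t : ℝ => h (γ t)) (deriv h (γ t) * d) t := by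
      have := hhd.scomp t hγ'
      simpa [smul_eq_mul, mul_comm, Function.comp_def] using this
    have H2g : HasDerivAt (fun t : ℝ => g (γ t)) (deriv g (γ t) * d) t := by
      have := hgd.scomp t hγ'
      simpa [smul_eq_mul, mul_comm, Function.comp_def] using this
    have H2 : HasDerivAt (fun t : ℝ => (starRingEnd ℂ) (g (γ t)))
        ((starRingEnd ℂ) (deriv g (γ t) * d)) t := by
      have hconj := Complex.conjCLE.hasFDerivAt.comp_hasDerivAt t H2g
      simpa [Function.comp_def] using hconj
    exact H1.add H2
  -- continuity of the derivative
  have hγcont : Continuous γ := by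
    rw [hγdef]; continuity
  have hha : AnalyticOnNhd ℂ h (Metric.ball 0 1) := hh.analyticOnNhd isOpen_ball
  have hga : AnalyticOnNhd ℂ g (Metric.ball 0 1) := hg.analyticOnNhd isOpen_ball
  have hcont : ContinuousOn
      (fun t : ℝ => deriv h (γ t) * d + (starRingEnd ℂ) (deriv g (γ t) * d))
      (Set.uIcc (0:ℝ) 1) := by
    have c1 : ContinuousOn (fun t : ℝ => deriv h (γ t)) (Set.uIcc (0:ℝ) 1) :=
      (hha.deriv.continuousOn).comp hγcont.continuousOn hγball
    have c2 : ContinuousOn (fun t : ℝ => deriv g (γ t)) (Set.uIcc (0:ℝ) 1) :=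
      (hga.deriv.continuousOn).comp hγcont.continuousOn hγball
    exact (c1.mul continuousOn_const).add
      (Complex.continuous_conj.comp_continuousOn (c2.mul continuousOn_const))
  have hFTC := intervalIntegral.integral_eq_sub_of_hasDerivAt hF hcont.intervalIntegrable
  have hγ0 : γ 0 = z₁ := by rw [hγdef]; simp
  have hγ1 : γ 1 = z₂ := by rw [hγdef]; dsimp only; rw [hddef]; push_cast; ring
  have hzero : (∫ t in (0:ℝ)..1,
      (deriv h (γ t) * d + (starRingEnd ℂ) (deriv g (γ t) * d))) = 0 := by
    rw [hFTC, hγ0, hγ1]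
    have := heq
    dsimp only at this
    rw [this]; ring
  -- split off the constant d
  set E : ℝ → ℂ := fun t => (deriv h (γ t) - 1) * d + (starRingEnd ℂ) (deriv g (γ t) * d)
    with hEdef
  have hEint : IntervalIntegrable E MeasureTheory.volume 0 1 := by
    have : ContinuousOn E (Set.uIcc (0:ℝ) 1) := by
      intro t ht
      have := hcont t ht
      have hEeq : E = fun t => (deriv h (γ t) * d + (starRingEnd ℂ) (deriv g (γ t) * d)) - d := by
        funext s; rw [hEdef]; ring
      rw [hEeq]
      exact ContinuousWithinAt.sub this continuousWithinAt_const
    exact this.intervalIntegrable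
  have hdint : (∫ t in (0:ℝ)..1, (d + E t)) = 0 := by
    rw [← hzero]
    congr 1; funext t; rw [hEdef]; ring
  have hdeq : d = -∫ t in (0:ℝ)..1, E t := by
    rw [intervalIntegral.integral_add intervalIntegrable_const hEint] at hdint
    simp only [intervalIntegral.integral_const, sub_zero, one_smul] at hdint
    linear_combination hdint
  -- bound on E
  have hEbnd : ∀ t ∈ Set.uIoc (0:ℝ) 1, ‖E t‖ ≤ c * ‖d‖ := by
    intro t ht
    have ht' : t ∈ Set.uIcc (0:ℝ) 1 := Set.uIoc_subset_uIcc ht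
    set a : ℂ := deriv h (γ t) - 1 with hadef
    set b : ℂ := deriv g (γ t) with hbdef
    obtain ⟨u, hu, hsum⟩ := exists_unit_align a b
    have hkb := key_bound M hM h g hh hg hh1 hg1 hclass u hu (hγball t ht')
    have hlogmono : -Real.log (1 - ‖γ t‖) ≤ -Real.log (1 - ρ) := by
      have h1 : (0:ℝ) < 1 - ρ := by linarith
      have h2 : 1 - ρ ≤ 1 - ‖γ t‖ := by
        have := hγabs t ht'; linarith
      have := Real.log_le_log h1 h2
      linarith
    have hab : ‖a‖ + ‖b‖ ≤ c := by
      rw [hsum]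
      calc ‖a + u * b‖ ≤ 2 * M * (-Real.log (1 - ‖γ t‖)) := hkb
        _ ≤ c := by
            rw [hcdef]
            exact mul_le_mul_of_nonneg_left hlogmono (by linarith : (0:ℝ) ≤ 2 * M)
    calc ‖E t‖ ≤ ‖a * d‖ + ‖(starRingEnd ℂ) (b * d)‖ := norm_add_le _ _
      _ = (‖a‖ + ‖b‖) * ‖d‖ := by
          simp only [norm_mul, Complex.norm_conj]
          ring
      _ ≤ c * ‖d‖ :=
          mul_le_mul_of_nonneg_right hab (norm_nonneg d)
  have hnormE : ‖∫ t in (0:ℝ)..1, E t‖ ≤ c * ‖d‖ := by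
    have := intervalIntegral.norm_integral_le_of_norm_le_const hEbnd
    simpa using this
  have habsneg : ‖d‖ = ‖∫ t in (0:ℝ)..1, E t‖ := by
    rw [hdeq, norm_neg]
  have hfinal : ‖d‖ ≤ c * ‖d‖ :=
    le_trans (le_of_eq habsneg) hnormE
  have hd0 : ‖d‖ = 0 := by nlinarith [norm_nonneg d]
  have : d = 0 := by
    rwa [norm_eq_zero] at hd0
  rw [hddef] at this
  have := sub_eq_zero.1 this
  exact this.symm
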